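/- Let g and g' be finitely supported probability mass functions on the positive integers such that g' first-order stochastically dominates g (i.e., Σ_{k ≤ m} g'(k) ≤ Σ_{k ≤ m} g(k) for every m). Then for any 0 ≤ L ≤ L' ≤ 1, we have 1 - Σ_k g(k)(1-L)^k ≤ 1 - Σ_k g'(k)(1-L')^k. In words, the informed fraction Γ weakly increases under a FOSD shift of the in-degree distribution combined with an increase in the fraction of active links. -/

import Mathlib

lemma fosd_aux (N : ℕ) (a : ℕ → ℝ) (x : ℝ) (hx0 : 0 ≤ x) (hx1 : x ≤ 1)
    (hS : ∀ m, 0 ≤ ∑ k ∈ Finset.range (m + 1), a k)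
    (htot : ∑ k ∈ Finset.range (N + 1), a k = 0) :
    0 ≤ ∑ k ∈ Finset.range (N + 1), (x ^ k) * a k := by
  have hb := Finset.sum_range_by_parts (fun k => x ^ k) a (N + 1)
  simp only [smul_eq_mul] at hb
  rw [hb]
  simp only [Nat.add_sub_cancel, htot, mul_zero, zero_sub, neg_nonneg]
  apply Finset.sum_nonpos
  intro i _
  have h1 : x ^ (i + 1) - x ^ i ≤ 0 := by
    have := pow_le_pow_of_le_one hx0 hx1 (Nat.le_succ i); rw [Nat.succ_eq_add_one] at this
    linarith
  exact mul_nonpos_of_nonpos_of_nonneg h1 (hS i)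

/-- If `g'` FOSD-dominates `g` and `0 ≤ L ≤ L' ≤ 1`, then
`Γ_g(L) ≤ Γ_{g'}(L')`. -/
theorem stmt_11 (N : ℕ) (g g' : ℕ → ℝ)
    (hg : ∀ k, 0 ≤ g k) (hg' : ∀ k, 0 ≤ g' k)
    (hsupp : ∀ k, g k ≠ 0 → 1 ≤ k ∧ k ≤ N)
    (hsupp' : ∀ k, g' k ≠ 0 → 1 ≤ k ∧ k ≤ N)
    (hsum : ∑ k ∈ Finset.range (N + 1), g k = 1)
    (hsum' : ∑ k ∈ Finset.range (N + 1), g' k = 1)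
    (hFOSD : ∀ m : ℕ, ∑ k ∈ Finset.range (m + 1), g' k ≤ ∑ k ∈ Finset.range (m + 1), g k)
    (L L' : ℝ) (h0 : 0 ≤ L) (hLL' : L ≤ L') (h1 : L' ≤ 1) :
    1 - ∑ k ∈ Finset.range (N + 1), g k * (1 - L) ^ k ≤
      1 - ∑ k ∈ Finset.range (N + 1), g' k * (1 - L') ^ k := by
  have hx'0 : (0:ℝ) ≤ 1 - L' := by linarith
  have hx1 : (1:ℝ) - L ≤ 1 := by linarith
  have hxx : (1:ℝ) - L' ≤ 1 - L := by linarith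
  -- step 1: g' with smaller base
  have step1 : ∑ k ∈ Finset.range (N + 1), g' k * (1 - L') ^ k ≤
      ∑ k ∈ Finset.range (N + 1), g' k * (1 - L) ^ k := by
    apply Finset.sum_le_sum
    intro k _
    exact mul_le_mul_of_nonneg_left (pow_le_pow_left₀ hx'0 hxx k) (hg' k)
  -- step 2: FOSD
  have step2 : ∑ k ∈ Finset.range (N + 1), g' k * (1 - L) ^ k ≤
      ∑ k ∈ Finset.range (N + 1), g k * (1 - L) ^ k := by
    have := fosd_aux N (fun k => g k - g' k) (1 - L) (le_trans hx'0 hxx) hx1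
      (fun m => by
        have := hFOSD m
        simpa [Finset.sum_sub_distrib] using sub_nonneg.mpr this)
      (by simp [Finset.sum_sub_distrib, hsum, hsum'])
    have h2 : ∑ k ∈ Finset.range (N + 1),
        ((1 - L) ^ k * g k - (1 - L) ^ k * g' k) =
        ∑ k ∈ Finset.range (N + 1), g k * (1 - L) ^ k -
        ∑ k ∈ Finset.range (N + 1), g' k * (1 - L) ^ k := by
      rw [Finset.sum_sub_distrib]
      congr 1 <;> exact Finset.sum_congr rfl (fun k _ => mul_comm _ _)
    simp only [mul_sub] at this
    linarith [h2 ▸ this]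
  linarith
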